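/- Let 𝒮 and 𝒜 be finite sets, γ ∈ (0,1), ρ a probability distribution on 𝒮, π a policy (π(·|s) ∈ Δ(𝒜) for each s), and let P, P̃ : 𝒮 × 𝒜 → Δ(𝒮) be transition kernels with Σ_{s'} |P(s'|s,a) − P̃(s'|s,a)| ≤ β for every (s,a). Define state distributions P^π_0 = ρ and P^π_h(s') = Σ_{s,a} P^π_{h−1}(s) π(a|s) P(s'|s,a) for h ≥ 1 (and P̃^π_h analogously with P̃), and discounted occupancy measures d^π(s,a) = Σ_{h=0}^∞ γ^h P^π_h(s) π(a|s) and d̃^π(s,a) = Σ_{h=0}^∞ γ^h P̃^π_h(s) π(a|s). Then Σ_{s,a} |d^π(s,a) − d̃^π(s,a)| ≤ β γ/(1−γ)². -/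

import Mathlib

open BigOperators

/-- The state distribution at step `h` obtained by following policy `π` under
transition kernel `P` starting from distribution `ρ`. -/
noncomputable def stateDist {S A : Type*} [Fintype S] [Fintype A]
    (ρ : S → ℝ) (π : S → A → ℝ) (P : S → A → S → ℝ) : ℕ → S → ℝ
  | 0 => ρ
  | (h+1) => fun s' => ∑ s, ∑ a, stateDist ρ π P h s * π s a * P s a s'

lemma stateDist_nonneg {S A : Type*} [Fintype S] [Fintype A]
    (ρ : S → ℝ) (hρ0 : ∀ s, 0 ≤ ρ s)
    (π : S → A → ℝ) (hπ0 : ∀ s a, 0 ≤ π s a)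
    (P : S → A → S → ℝ) (hP0 : ∀ s a s', 0 ≤ P s a s') :
    ∀ h s, 0 ≤ stateDist ρ π P h s := by
  intro h
  induction h with
  | zero => exact hρ0
  | succ n ih =>
    intro s'
    simp only [stateDist]
    refine Finset.sum_nonneg fun s _ => Finset.sum_nonneg fun a _ => ?_
    exact mul_nonneg (mul_nonneg (ih s) (hπ0 s a)) (hP0 s a s')

lemma stateDist_sum {S A : Type*} [Fintype S] [Fintype A]
    (ρ : S → ℝ) (hρ1 : ∑ s, ρ s = 1)
    (π : S → A → ℝ) (hπ1 : ∀ s, ∑ a, π s a = 1)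
    (P : S → A → S → ℝ) (hP1 : ∀ s a, ∑ s', P s a s' = 1) :
    ∀ h, ∑ s, stateDist ρ π P h s = 1 := by
  intro h
  induction h with
  | zero => exact hρ1
  | succ n ih =>
    simp only [stateDist]
    rw [Finset.sum_comm]
    calc ∑ s, ∑ s', ∑ a, stateDist ρ π P n s * π s a * P s a s'
        = ∑ s, ∑ a, ∑ s', stateDist ρ π P n s * π s a * P s a s' := by
          exact Finset.sum_congr rfl fun s _ => Finset.sum_comm
      _ = ∑ s, ∑ a, stateDist ρ π P n s * π s a := by
          refine Finset.sum_congr rfl fun s _ => Finset.sum_congr rfl fun a _ => ?_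
          rw [← Finset.mul_sum, hP1, mul_one]
      _ = ∑ s, stateDist ρ π P n s := by
          refine Finset.sum_congr rfl fun s _ => ?_
          rw [← Finset.mul_sum, hπ1, mul_one]
      _ = 1 := ih

lemma tv_bound {S A : Type*} [Fintype S] [Fintype A]
    (ρ : S → ℝ) (hρ0 : ∀ s, 0 ≤ ρ s) (hρ1 : ∑ s, ρ s = 1)
    (π : S → A → ℝ) (hπ0 : ∀ s a, 0 ≤ π s a) (hπ1 : ∀ s, ∑ a, π s a = 1)
    (P Pt : S → A → S → ℝ)
    (hP0 : ∀ s a s', 0 ≤ P s a s') (hP1 : ∀ s a, ∑ s', P s a s' = 1)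
    (hPt0 : ∀ s a s', 0 ≤ Pt s a s') (hPt1 : ∀ s a, ∑ s', Pt s a s' = 1)
    (β : ℝ) (hclose : ∀ s a, ∑ s', |P s a s' - Pt s a s'| ≤ β) :
    ∀ h, ∑ s, |stateDist ρ π P h s - stateDist ρ π Pt h s| ≤ h * β := by
  intro h
  induction h with
  | zero => simp [stateDist]
  | succ n ih =>
    set D := stateDist ρ π P with hD
    set Dt := stateDist ρ π Pt with hDt
    have hDt0 : ∀ s, 0 ≤ Dt n s := stateDist_nonneg ρ hρ0 π hπ0 Pt hPt0 n
    have hDt1 : ∑ s, Dt n s = 1 := stateDist_sum ρ hρ1 π hπ1 Pt hPt1 n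
    have key : ∀ s', |D (n+1) s' - Dt (n+1) s'| ≤
        ∑ s, ∑ a, (|D n s - Dt n s| * π s a * P s a s'
          + Dt n s * π s a * |P s a s' - Pt s a s'|) := by
      intro s'
      have heq : D (n+1) s' - Dt (n+1) s' =
          ∑ s, ∑ a, ((D n s - Dt n s) * π s a * P s a s'
            + Dt n s * π s a * (P s a s' - Pt s a s')) := by
        rw [hD, hDt]
        simp only [stateDist, ← Finset.sum_sub_distrib]
        refine Finset.sum_congr rfl fun s _ => Finset.sum_congr rfl fun a _ => ?_
        ring
      rw [heq]
      refine (Finset.abs_sum_le_sum_abs _ _).trans ?_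
      refine Finset.sum_le_sum fun s _ => ?_
      refine (Finset.abs_sum_le_sum_abs _ _).trans ?_
      refine Finset.sum_le_sum fun a _ => ?_
      refine (abs_add_le _ _).trans ?_
      rw [abs_mul, abs_mul, abs_mul, abs_mul, abs_of_nonneg (hπ0 s a),
        abs_of_nonneg (hP0 s a s'), abs_of_nonneg (hDt0 s)]
    calc ∑ s', |D (n+1) s' - Dt (n+1) s'|
        ≤ ∑ s', ∑ s, ∑ a, (|D n s - Dt n s| * π s a * P s a s'
            + Dt n s * π s a * |P s a s' - Pt s a s'|) :=
          Finset.sum_le_sum fun s' _ => key s'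
      _ = ∑ s, ∑ a, ∑ s', (|D n s - Dt n s| * π s a * P s a s'
            + Dt n s * π s a * |P s a s' - Pt s a s'|) := by
          rw [Finset.sum_comm]
          exact Finset.sum_congr rfl fun s _ => Finset.sum_comm
      _ = ∑ s, ∑ a, (|D n s - Dt n s| * π s a * (∑ s', P s a s')
            + Dt n s * π s a * (∑ s', |P s a s' - Pt s a s'|)) := by
          refine Finset.sum_congr rfl fun s _ => Finset.sum_congr rfl fun a _ => ?_
          rw [Finset.sum_add_distrib, ← Finset.mul_sum, ← Finset.mul_sum]
      _ ≤ ∑ s, ∑ a, (|D n s - Dt n s| * π s a * 1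
            + Dt n s * π s a * β) := by
          refine Finset.sum_le_sum fun s _ => Finset.sum_le_sum fun a _ => ?_
          gcongr
          · exact mul_nonneg (abs_nonneg _) (hπ0 s a)
          · rw [hP1]
          · exact mul_nonneg (hDt0 s) (hπ0 s a)
          · exact hclose s a
      _ = ∑ s, (|D n s - Dt n s| + Dt n s * β) := by
          refine Finset.sum_congr rfl fun s _ => ?_
          rw [Finset.sum_add_distrib]
          have h1 : ∑ a, |D n s - Dt n s| * π s a * 1 = |D n s - Dt n s| := by
            simp only [mul_one, ← Finset.mul_sum, hπ1, mul_one]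
          have h2 : ∑ a, Dt n s * π s a * β = Dt n s * β := by
            rw [← Finset.sum_mul, ← Finset.mul_sum, hπ1, mul_one]
          rw [h1, h2]
      _ = (∑ s, |D n s - Dt n s|) + β := by
          rw [Finset.sum_add_distrib, ← Finset.sum_mul, hDt1, one_mul]
      _ ≤ n * β + β := add_le_add_left ih β
      _ = (n + 1 : ℕ) * β := by push_cast; ring

/-- Lemma: occupancy measures of nearby transition kernels are close. -/
theorem occupancy_measure_perturbation
    {S A : Type*} [Fintype S] [Fintype A] [Nonempty S] [Nonempty A]
    (γ : ℝ) (hγ0 : 0 < γ) (hγ1 : γ < 1)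
    (ρ : S → ℝ) (hρ0 : ∀ s, 0 ≤ ρ s) (hρ1 : ∑ s, ρ s = 1)
    (π : S → A → ℝ) (hπ0 : ∀ s a, 0 ≤ π s a) (hπ1 : ∀ s, ∑ a, π s a = 1)
    (P Pt : S → A → S → ℝ)
    (hP0 : ∀ s a s', 0 ≤ P s a s') (hP1 : ∀ s a, ∑ s', P s a s' = 1)
    (hPt0 : ∀ s a s', 0 ≤ Pt s a s') (hPt1 : ∀ s a, ∑ s', Pt s a s' = 1)
    (β : ℝ)
    (hclose : ∀ s a, ∑ s', |P s a s' - Pt s a s'| ≤ β)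
    (dπ dπt : S → A → ℝ)
    (hdπ : ∀ s a, dπ s a = ∑' h : ℕ, γ^h * stateDist ρ π P h s * π s a)
    (hdπt : ∀ s a, dπt s a = ∑' h : ℕ, γ^h * stateDist ρ π Pt h s * π s a) :
    ∑ s, ∑ a, |dπ s a - dπt s a| ≤ β * γ / (1 - γ)^2 := by
  have hβ0 : 0 ≤ β := le_trans (Finset.sum_nonneg fun _ _ => abs_nonneg _)
    (hclose (Classical.arbitrary _) (Classical.arbitrary _))
  set D := stateDist ρ π P with hDdef
  set Dt := stateDist ρ π Pt with hDtdef
  have hD0 : ∀ h s, 0 ≤ D h s := stateDist_nonneg ρ hρ0 π hπ0 P hP0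
  have hDt0 : ∀ h s, 0 ≤ Dt h s := stateDist_nonneg ρ hρ0 π hπ0 Pt hPt0
  have hD1 : ∀ h, ∑ s, D h s = 1 := stateDist_sum ρ hρ1 π hπ1 P hP1
  have hDt1 : ∀ h, ∑ s, Dt h s = 1 := stateDist_sum ρ hρ1 π hπ1 Pt hPt1
  have hDle : ∀ h s, D h s ≤ 1 := fun h s => by
    calc D h s ≤ ∑ s', D h s' :=
          Finset.single_le_sum (fun s' _ => hD0 h s') (Finset.mem_univ s)
      _ = 1 := hD1 h
  have hDtle : ∀ h s, Dt h s ≤ 1 := fun h s => by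
    calc Dt h s ≤ ∑ s', Dt h s' :=
          Finset.single_le_sum (fun s' _ => hDt0 h s') (Finset.mem_univ s)
      _ = 1 := hDt1 h
  have hπle : ∀ s a, π s a ≤ 1 := fun s a => by
    calc π s a ≤ ∑ a', π s a' :=
          Finset.single_le_sum (fun a' _ => hπ0 s a') (Finset.mem_univ a)
      _ = 1 := hπ1 s
  have hγ0' : (0:ℝ) ≤ γ := hγ0.le
  have hgeo : Summable (fun h : ℕ => γ ^ h) :=
    summable_geometric_of_lt_one hγ0' hγ1
  have hsum1 : ∀ s a, Summable (fun h : ℕ => γ ^ h * D h s * π s a) := by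
    intro s a
    refine Summable.of_nonneg_of_le (fun h => ?_) (fun h => ?_) hgeo
    · exact mul_nonneg (mul_nonneg (pow_nonneg hγ0' h) (hD0 h s)) (hπ0 s a)
    · calc γ ^ h * D h s * π s a = γ ^ h * (D h s * π s a) := by ring
        _ ≤ γ ^ h * 1 := mul_le_mul_of_nonneg_left
            (mul_le_one₀ (hDle h s) (hπ0 s a) (hπle s a)) (pow_nonneg hγ0' h)
        _ = γ ^ h := mul_one _
  have hsum2 : ∀ s a, Summable (fun h : ℕ => γ ^ h * Dt h s * π s a) := by
    intro s a
    refine Summable.of_nonneg_of_le (fun h => ?_) (fun h => ?_) hgeo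
    · exact mul_nonneg (mul_nonneg (pow_nonneg hγ0' h) (hDt0 h s)) (hπ0 s a)
    · calc γ ^ h * Dt h s * π s a = γ ^ h * (Dt h s * π s a) := by ring
        _ ≤ γ ^ h * 1 := mul_le_mul_of_nonneg_left
            (mul_le_one₀ (hDtle h s) (hπ0 s a) (hπle s a)) (pow_nonneg hγ0' h)
        _ = γ ^ h := mul_one _
  -- the pointwise "absolute difference" summand
  set F : S → A → ℕ → ℝ := fun s a h => γ ^ h * |D h s - Dt h s| * π s a with hF
  have htv : ∀ h : ℕ, ∑ s, |D h s - Dt h s| ≤ h * β :=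
    tv_bound ρ hρ0 hρ1 π hπ0 hπ1 P Pt hP0 hP1 hPt0 hPt1 β hclose
  have hngeo : Summable (fun h : ℕ => β * ((h : ℝ) * γ ^ h)) := by
    have : Summable (fun h : ℕ => (h : ℝ) * γ ^ h) := by
      have := summable_pow_mul_geometric_of_norm_lt_one 1
        (r := γ) (by rw [Real.norm_eq_abs, abs_of_nonneg hγ0']; exact hγ1)
      simpa using this
    exact this.mul_left β
  have hFsummable : ∀ s a, Summable (F s a) := by
    intro s a
    refine Summable.of_nonneg_of_le (fun h => ?_) (fun h => ?_) hgeo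
    · exact mul_nonneg (mul_nonneg (pow_nonneg hγ0' h) (abs_nonneg _)) (hπ0 s a)
    · have habs : |D h s - Dt h s| ≤ 1 := by
        refine abs_le.mpr ⟨by linarith [hD0 h s, hDtle h s], by linarith [hDt0 h s, hDle h s]⟩
      calc F s a h = γ ^ h * (|D h s - Dt h s| * π s a) := by rw [hF]; ring
        _ ≤ γ ^ h * 1 := mul_le_mul_of_nonneg_left
            (mul_le_one₀ habs (hπ0 s a) (hπle s a)) (pow_nonneg hγ0' h)
        _ = γ ^ h := mul_one _
  have hstep : ∀ s a, |dπ s a - dπt s a| ≤ ∑' h : ℕ, F s a h := by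
    intro s a
    rw [hdπ, hdπt, ← Summable.tsum_sub (hsum1 s a) (hsum2 s a)]
    have hgg : ∀ h : ℕ, |γ ^ h * D h s * π s a - γ ^ h * Dt h s * π s a| = F s a h := by
      intro h
      have heq : γ ^ h * D h s * π s a - γ ^ h * Dt h s * π s a
          = γ ^ h * (D h s - Dt h s) * π s a := by ring
      rw [heq, hF]
      dsimp only
      rw [abs_mul, abs_mul, abs_of_nonneg (pow_nonneg hγ0' h), abs_of_nonneg (hπ0 s a)]
    have hsumabs : Summable (fun h : ℕ =>
        ‖γ ^ h * D h s * π s a - γ ^ h * Dt h s * π s a‖) := by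
      simp only [Real.norm_eq_abs, hgg]
      exact hFsummable s a
    calc |∑' h : ℕ, (γ ^ h * D h s * π s a - γ ^ h * Dt h s * π s a)|
        = ‖∑' h : ℕ, (γ ^ h * D h s * π s a - γ ^ h * Dt h s * π s a)‖ := by
          rw [Real.norm_eq_abs]
      _ ≤ ∑' h : ℕ, ‖γ ^ h * D h s * π s a - γ ^ h * Dt h s * π s a‖ :=
          norm_tsum_le_tsum_norm hsumabs
      _ = ∑' h : ℕ, F s a h := by
          refine tsum_congr fun h => ?_
          rw [Real.norm_eq_abs, hgg]
  have hswap : ∑ s, ∑ a, ∑' h : ℕ, F s a h = ∑' h : ℕ, ∑ s, ∑ a, F s a h := by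
    have h1 : ∀ s, ∑ a, ∑' h : ℕ, F s a h = ∑' h : ℕ, ∑ a, F s a h := fun s =>
      (Summable.tsum_finsetSum (fun a _ => hFsummable s a)).symm
    calc ∑ s, ∑ a, ∑' h : ℕ, F s a h = ∑ s, ∑' h : ℕ, ∑ a, F s a h :=
          Finset.sum_congr rfl fun s _ => h1 s
      _ = ∑' h : ℕ, ∑ s, ∑ a, F s a h :=
          (Summable.tsum_finsetSum (fun s _ => summable_sum fun a _ => hFsummable s a)).symm
  have hterm : ∀ h : ℕ, ∑ s, ∑ a, F s a h ≤ β * ((h : ℝ) * γ ^ h) := by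
    intro h
    have heq : ∑ s, ∑ a, F s a h = γ ^ h * ∑ s, |D h s - Dt h s| := by
      rw [Finset.mul_sum]
      refine Finset.sum_congr rfl fun s _ => ?_
      rw [hF]
      dsimp only
      rw [← Finset.mul_sum, hπ1, mul_one]
    rw [heq]
    calc γ ^ h * ∑ s, |D h s - Dt h s| ≤ γ ^ h * ((h : ℝ) * β) :=
          mul_le_mul_of_nonneg_left (htv h) (pow_nonneg hγ0' h)
      _ = β * ((h : ℝ) * γ ^ h) := by ring
  have hLsummable : Summable (fun h : ℕ => ∑ s, ∑ a, F s a h) :=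
    summable_sum fun s _ => summable_sum fun a _ => hFsummable s a
  calc ∑ s, ∑ a, |dπ s a - dπt s a|
      ≤ ∑ s, ∑ a, ∑' h : ℕ, F s a h :=
        Finset.sum_le_sum fun s _ => Finset.sum_le_sum fun a _ => hstep s a
    _ = ∑' h : ℕ, ∑ s, ∑ a, F s a h := hswap
    _ ≤ ∑' h : ℕ, β * ((h : ℝ) * γ ^ h) := Summable.tsum_le_tsum hterm hLsummable hngeo
    _ = β * ∑' h : ℕ, (h : ℝ) * γ ^ h := tsum_mul_left
    _ = β * (γ / (1 - γ) ^ 2) := by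
        rw [tsum_coe_mul_geometric_of_norm_lt_one
          (by rw [Real.norm_eq_abs, abs_of_nonneg hγ0']; exact hγ1)]
    _ = β * γ / (1 - γ) ^ 2 := by ring
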